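/- Let T be a triangulated category and let C1, C2 be strictly full triangulated subcategories of T such that Hom_T(X, Y) = 0 for every object X of C2 and every object Y of C1. Assume that for every object D of T there exists a distinguished triangle B ⟶ D ⟶ A ⟶ B⟦1⟧ with B in C2 and A in C1. Then the inclusion functor of C2 into T admits a right adjoint, and C1 consists exactly of the objects D of T with Hom_T(X, D) = 0 for all objects X of C2. -/

import Mathlib

open CategoryTheory Category Limits Pretriangulated

universe v u

variable (T : Type u) [Category.{v} T] [HasZeroObject T] [HasShift T ℤ]
  [Preadditive T] [∀ n : ℤ, (shiftFunctor T n).Additive] [Pretriangulated T]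

/-- A strictly full triangulated subcategory of `T`, encoded as a predicate on objects:
it contains the zero objects, is closed under isomorphisms, is closed under shifts in
both directions, and is closed under extensions. -/
structure IsTriangulatedSubcategory (P : T → Prop) : Prop where
  zero : ∀ X : T, IsZero X → P X
  isoClosed : ∀ ⦃X Y : T⦄, (X ≅ Y) → P X → P Y
  shift : ∀ (X : T) (n : ℤ), P X → P (X⟦n⟧)
  ext₂ : ∀ Tr : Triangle T, (Tr ∈ distTriang T) → P Tr.obj₁ → P Tr.obj₃ → P Tr.obj₂

/-- If `C₁`, `C₂` are strictly full triangulated subcategories with no nonzero morphisms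
from `C₂` to `C₁` such that every object of `T` fits into a distinguished triangle
`B ⟶ D ⟶ A ⟶ B⟦1⟧` with `B ∈ C₂` and `A ∈ C₁`, then the inclusion functor of `C₂` into
`T` admits a right adjoint and `C₁` is the right orthogonal of `C₂`. -/
theorem decomposition_triangles_give_right_adjoint [IsTriangulated T]
    (C1 C2 : T → Prop)
    (hC1 : IsTriangulatedSubcategory T C1) (hC2 : IsTriangulatedSubcategory T C2)
    (hHom : ∀ (X Y : T), C2 X → C1 Y → ∀ f : X ⟶ Y, f = 0)
    (htriang : ∀ D : T, ∃ (B A : T) (f : B ⟶ D) (g : D ⟶ A) (h : A ⟶ B⟦(1 : ℤ)⟧),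
      C2 B ∧ C1 A ∧ (Triangle.mk f g h ∈ distTriang T)) :
    (ObjectProperty.ι C2).IsLeftAdjoint ∧
      (∀ D : T, C1 D ↔ ∀ X : T, C2 X → ∀ f : X ⟶ D, f = 0) := by
  choose B A f g h hB hA hdist using htriang
  have bij : ∀ (X : ObjectProperty.FullSubcategory C2) (D : T),
      Function.Bijective (fun (ψ : X.obj ⟶ B D) => ψ ≫ f D) := by
    intro X D
    constructor
    · intro ψ₁ ψ₂ hψ
      have hsub : (ψ₁ - ψ₂) ≫ f D = 0 := by
        dsimp at hψ
        rw [Preadditive.sub_comp, hψ, sub_self]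
      obtain ⟨φ, hφ⟩ := Triangle.coyoneda_exact₂ _
        (inv_rot_of_distTriang _ (hdist D)) (ψ₁ - ψ₂) hsub
      have hφ0 : φ = 0 :=
        hHom _ _ X.property (hC1.shift (A D) (-1) (hA D)) φ
      rw [hφ0, zero_comp] at hφ
      exact sub_eq_zero.1 hφ
    · intro φ
      have hφg : φ ≫ g D = 0 := hHom _ _ X.property (hA D) _
      obtain ⟨ψ, hψ⟩ := Triangle.coyoneda_exact₂ _ (hdist D) φ hφg
      exact ⟨ψ, hψ.symm⟩
  constructor
  · let e : ∀ (X : ObjectProperty.FullSubcategory C2) (D : T),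
        ((ObjectProperty.ι C2).obj X ⟶ D) ≃
          (X ⟶ (⟨B D, hB D⟩ : ObjectProperty.FullSubcategory C2)) :=
      fun X D => (Equiv.ofBijective (fun ψ : X ⟶ (⟨B D, hB D⟩ : ObjectProperty.FullSubcategory C2) => ψ.hom ≫ f D)
        ((bij X D).comp ⟨fun a b hab => ObjectProperty.hom_ext _ hab, fun ψ => ⟨ObjectProperty.homMk ψ, rfl⟩⟩)).symm
    have he : ∀ (X' X : ObjectProperty.FullSubcategory C2) (D : T) (fm : X' ⟶ X)
        (gm : (ObjectProperty.ι C2).obj X ⟶ D),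
        e X' D ((ObjectProperty.ι C2).map fm ≫ gm) = fm ≫ e X D gm := by
      intro X' X D fm gm
      rw [Equiv.symm_apply_eq]
      have hgm : (show X.obj ⟶ B D from ((e X D) gm).hom) ≫ f D = gm :=
        Equiv.apply_symm_apply (Equiv.ofBijective (fun ψ : X ⟶ (⟨B D, hB D⟩ : ObjectProperty.FullSubcategory C2) => ψ.hom ≫ f D) _) gm
      show (ObjectProperty.ι C2).map fm ≫ gm =
        (fm ≫ (e X D) gm).hom ≫ f D
      rw [ObjectProperty.FullSubcategory.comp_hom, assoc, hgm]
      rfl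
    exact (Adjunction.adjunctionOfEquivRight e he).isLeftAdjoint
  · intro D
    constructor
    · intro hD X hX φ
      exact hHom X D hX hD φ
    · intro hD
      have hf0 : f D = 0 := hD _ (hB D) _
      -- From the triangle, `h D` admits a section.
      obtain ⟨s, hs⟩ := Triangle.coyoneda_exact₁ _ (hdist D)
        (𝟙 ((B D)⟦(1 : ℤ)⟧)) (by
          show 𝟙 ((B D)⟦(1 : ℤ)⟧) ≫ (f D)⟦(1 : ℤ)⟧' = 0
          rw [hf0, Functor.map_zero, comp_zero])
      have hs0 : s = 0 := hHom _ _ (hC2.shift (B D) 1 (hB D)) (hA D) s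
      rw [hs0, zero_comp] at hs
      have hzero1 : IsZero ((B D)⟦(1 : ℤ)⟧) := by
        rw [IsZero.iff_id_eq_zero]
        exact hs
      have hzeroB : IsZero (B D) :=
        ((shiftFunctor T (-1 : ℤ)).map_isZero hzero1).of_iso
          ((shiftEquiv T (1 : ℤ)).unitIso.app (B D))
      have : IsIso (g D) :=
        (Triangle.isZero₁_iff_isIso₂ _ (hdist D)).1 hzeroB
      exact hC1.isoClosed (asIso (g D)).symm (hA D)
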